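/- (Lemma on symmetry of second variations.) Assume ∇ ∘ j = 0 and that ev_ψ(j^a_{iα}) = 0 for every ψ ∈ Ē := ker ∇ and all a, i, α. For R ∈ F set δR = j*(∂R) ∈ F̄_{A′} and φ(R) = j(Λ(δR)) ∈ F^A. Then for all K, L, M ∈ F: ⟨ev_{φ(K)}(δL), Λ(δM)⟩ − ⟨ev_{φ(M)}(δL), Λ(δK)⟩ ∈ Div F^M, where ev_V applied to a family acts componentwise. -/

import Mathlib

noncomputable section

variable {𝔽 : Type*} [Field 𝔽] {F : Type*} [CommRing F] [Algebra 𝔽 F] {m : ℕ}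
  {A A' : Type*}

/-- Membership in the space of divergences `Div F^M = {Σ_μ D_μ ψ^μ}`. -/
def IsDiv (D : Fin m → Derivation 𝔽 F F) (f : F) : Prop :=
  ∃ ψ : Fin m → F, f = ∑ μ, D μ (ψ μ)

/-- The evolutionary differentiation `ev_φ f = Σ_a φ^a · ∂_a f` (a finite sum). -/
def ev (pa : A → Derivation 𝔽 F F) (φ : A → F) (f : F) : F :=
  ∑ᶠ a, φ a * pa a f

/-- `(∇φ)^a_μ = D_μ φ^a + Σ_b Γ^a_{μb} · φ^b`; here `Γ b μ a` denotes `Γ^b_{μa}`. -/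
def nabla (D : Fin m → Derivation 𝔽 F F) (Γ : A → Fin m → A → F)
    (φ : A → F) (a : A) (μ : Fin m) : F :=
  D μ (φ a) + ∑ᶠ b, Γ a μ b * φ b

/-- `(∇*χ)_a = -Σ_μ D_μ χ^μ_a + Σ_{μ,b} Γ^b_{μa} · χ^μ_b`. -/
def nablaStar (D : Fin m → Derivation 𝔽 F F) (Γ : A → Fin m → A → F)
    (χ : Fin m → A → F) (a : A) : F :=
  -∑ μ, D μ (χ μ a) + ∑ᶠ b, ∑ μ, Γ b μ a * χ μ b

/-- The pairing `⟨f, φ⟩ = Σ_a f_a · φ^a`. -/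
def pair (f φ : A → F) : F := ∑ᶠ a, f a * φ a

/-- `D^i = D_1^{i^1} ∘ ⋯ ∘ D_m^{i^m}`. -/
def Dpow (D : Fin m → Derivation 𝔽 F F) (i : Fin m → ℕ) : F → F :=
  (List.finRange m).foldr (fun μ g => (⇑(D μ))^[i μ] ∘ g) id

/-- `|i| = i^1 + ⋯ + i^m`. -/
def msize {m : ℕ} (i : Fin m → ℕ) : ℕ := ∑ μ, i μ

/-- The differential operator `P(D)L = Σ_i P_i · D^i L`. -/
def applyP (D : Fin m → Derivation 𝔽 F F) (P : (Fin m → ℕ) → F) (L : F) : F :=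
  ∑ᶠ i, P i * Dpow D i L

/-- The Lagrange dual operator `P*(D)K = Σ_i (-1)^{|i|} D^i (P_i · K)`. -/
def applyPstar (D : Fin m → Derivation 𝔽 F F) (P : (Fin m → ℕ) → F) (K : F) : F :=
  ∑ᶠ i, (-1 : F) ^ msize i * Dpow D i (P i * K)

/-- The jet map `(jφ)^a = Σ_{i,α} j^a_{iα} · D^i φ^α`; here `jc a i α` denotes `j^a_{iα}`. -/
def jmap (D : Fin m → Derivation 𝔽 F F) (jc : A → (Fin m → ℕ) → A' → F)
    (φ : A' → F) (a : A) : F :=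
  ∑ᶠ i, ∑ᶠ α, jc a i α * Dpow D i (φ α)

/-- The Lagrange dual `(j*f)_α = Σ_{a,i} (-1)^{|i|} D^i (j^a_{iα} · f_a)`. -/
def jstar (D : Fin m → Derivation 𝔽 F F) (jc : A → (Fin m → ℕ) → A' → F)
    (f : A → F) (α : A') : F :=
  ∑ᶠ a, ∑ᶠ i, (-1 : F) ^ msize i * Dpow D i (jc a i α * f a)

/-- `(Λf)^α = Σ_{β,i} Λ^{αβ}_i · D^i f_β`; here `Λc α β i` denotes `Λ^{αβ}_i`. -/
def Lam (D : Fin m → Derivation 𝔽 F F) (Λc : A' → A' → (Fin m → ℕ) → F)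
    (f : A' → F) (α : A') : F :=
  ∑ᶠ β, ∑ᶠ i, Λc α β i * Dpow D i (f β)

/-- The Lagrange dual `(Λ*f)^α = Σ_{β,i} (-1)^{|i|} D^i (Λ^{βα}_i · f_β)`. -/
def LamStar (D : Fin m → Derivation 𝔽 F F) (Λc : A' → A' → (Fin m → ℕ) → F)
    (f : A' → F) (α : A') : F :=
  ∑ᶠ β, ∑ᶠ i, (-1 : F) ^ msize i * Dpow D i (Λc β α i * f β)

/-- The variational derivative `δR = j*(∂R)`, where `∂R = (∂_a R)`. -/
def vard (D : Fin m → Derivation 𝔽 F F) (pa : A → Derivation 𝔽 F F)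
    (jc : A → (Fin m → ℕ) → A' → F) (R : F) : A' → F :=
  jstar D jc (fun a => pa a R)

/-- The Hamiltonian vector `φ(R) = j(Λ(δR))`. -/
def hamv (D : Fin m → Derivation 𝔽 F F) (pa : A → Derivation 𝔽 F F)
    (jc : A → (Fin m → ℕ) → A' → F) (Λc : A' → A' → (Fin m → ℕ) → F) (R : F) : A → F :=
  jmap D jc (Lam D Λc (vard D pa jc R))

/-- The commutator `[ev_ψ, Λ]`, acting with coefficients `ev_ψ(Λ^{αβ}_i)`. -/
def evLam (D : Fin m → Derivation 𝔽 F F) (pa : A → Derivation 𝔽 F F)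
    (Λc : A' → A' → (Fin m → ℕ) → F) (ψ : A → F) (f : A' → F) (α : A') : F :=
  ∑ᶠ β, ∑ᶠ i, ev pa ψ (Λc α β i) * Dpow D i (f β)

namespace Aux

open Function

variable (D : Fin m → Derivation 𝔽 F F)

theorem isDiv_zero : IsDiv D 0 := ⟨0, by simp⟩

theorem isDiv_add {f g : F} (hf : IsDiv D f) (hg : IsDiv D g) : IsDiv D (f + g) := by
  obtain ⟨ψ, rfl⟩ := hf; obtain ⟨χ, rfl⟩ := hg
  exact ⟨ψ + χ, by simp [Finset.sum_add_distrib]⟩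

theorem isDiv_neg {f : F} (hf : IsDiv D f) : IsDiv D (-f) := by
  obtain ⟨ψ, rfl⟩ := hf
  exact ⟨-ψ, by simp [Finset.sum_neg_distrib]⟩

theorem isDiv_sub {f g : F} (hf : IsDiv D f) (hg : IsDiv D g) : IsDiv D (f - g) := by
  rw [sub_eq_add_neg]; exact isDiv_add D hf (isDiv_neg D hg)

theorem isDiv_D (μ : Fin m) (g : F) : IsDiv D (D μ g) := by
  classical
  refine ⟨fun ν => if ν = μ then g else 0, ?_⟩
  rw [Finset.sum_eq_single μ] <;> simp +contextual

theorem isDiv_sum {ι : Type*} (s : Finset ι) (g : ι → F) (h : ∀ x ∈ s, IsDiv D (g x)) :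
    IsDiv D (∑ x ∈ s, g x) := by
  classical
  induction s using Finset.induction with
  | empty => simpa using isDiv_zero D
  | insert _ _ hx ih =>
    rw [Finset.sum_insert hx]
    exact isDiv_add D (h _ (Finset.mem_insert_self _ _))
      (ih fun x hxs => h x (Finset.mem_insert_of_mem hxs))

theorem isDiv_finsum {ι : Type*} {g : ι → F} (hs : (support g).Finite)
    (h : ∀ x, IsDiv D (g x)) : IsDiv D (∑ᶠ x, g x) := by
  rw [finsum_eq_sum_of_support_subset g hs.coe_toFinset.ge]
  exact isDiv_sum D _ _ fun x _ => h x

/-- transitivity helper: if `x - y` and `y - z` are divergences then so is `x - z` -/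
theorem isDiv_trans {x y z : F} (h1 : IsDiv D (x - y)) (h2 : IsDiv D (y - z)) :
    IsDiv D (x - z) := by
  have := isDiv_add D h1 h2; rwa [sub_add_sub_cancel] at this


section DpowLemmas

theorem foldr_apply_comm (hDcomm : ∀ μ ν (f : F), D μ (D ν f) = D ν (D μ f))
    (l : List (Fin m)) (i : Fin m → ℕ) (ν : Fin m) (f : F) :
    l.foldr (fun μ g => (⇑(D μ))^[i μ] ∘ g) id (D ν f)
      = D ν (l.foldr (fun μ g => (⇑(D μ))^[i μ] ∘ g) id f) := by
  induction l with
  | nil => rfl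
  | cons μ t ih =>
    have hc : Function.Commute (⇑(D μ)) (⇑(D ν)) := fun x => hDcomm μ ν x
    simp only [List.foldr_cons, Function.comp_apply, ih]
    exact (hc.iterate_left (i μ)) _

theorem foldr_congr (l : List (Fin m)) {i j : Fin m → ℕ} (h : ∀ ν ∈ l, i ν = j ν) (f : F) :
    l.foldr (fun μ g => (⇑(D μ))^[i μ] ∘ g) id f
      = l.foldr (fun μ g => (⇑(D μ))^[j μ] ∘ g) id f := by
  induction l with
  | nil => rfl
  | cons μ t ih =>
    simp only [List.foldr_cons, Function.comp_apply,
      ih (fun ν hν => h ν (List.mem_cons_of_mem _ hν)), h μ List.mem_cons_self]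

theorem dpow_D (hDcomm : ∀ μ ν (f : F), D μ (D ν f) = D ν (D μ f))
    (i : Fin m → ℕ) (ν : Fin m) (f : F) :
    Dpow D i (D ν f) = D ν (Dpow D i f) :=
  foldr_apply_comm D hDcomm _ i ν f

theorem dpow_succ (hDcomm : ∀ μ ν (f : F), D μ (D ν f) = D ν (D μ f))
    (i : Fin m → ℕ) (μ : Fin m) (f : F) :
    Dpow D (Function.update i μ (i μ + 1)) f = Dpow D i (D μ f) := by
  classical
  have key : ∀ l : List (Fin m), l.Nodup → μ ∈ l →
      l.foldr (fun ν g => (⇑(D ν))^[Function.update i μ (i μ + 1) ν] ∘ g) id f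
        = l.foldr (fun ν g => (⇑(D ν))^[i ν] ∘ g) id (D μ f) := by
    intro l
    induction l with
    | nil => intro _ h; exact absurd h List.not_mem_nil
    | cons ν t ih =>
      intro hnd hmem
      have hνt : ν ∉ t := (List.nodup_cons.mp hnd).1
      have hndt : t.Nodup := (List.nodup_cons.mp hnd).2
      simp only [List.foldr_cons, Function.comp_apply]
      rcases eq_or_ne μ ν with rfl | hne
      · rw [foldr_congr D t (fun ρ hρ => Function.update_of_ne
          (fun h => hνt (by rw [← h]; exact hρ)) _ _) f]
        rw [Function.update_self, Function.iterate_succ_apply,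
          ← foldr_apply_comm D hDcomm t i μ f]
      · have hmt : μ ∈ t := by
          rcases List.mem_cons.mp hmem with h | h
          · exact absurd h hne
          · exact h
        rw [Function.update_of_ne (Ne.symm hne), ih hndt hmt]
  exact key (List.finRange m) (List.nodup_finRange m) (List.mem_finRange μ)

/-- Dpow as a linear map. -/
def DpowLM (i : Fin m → ℕ) : F →ₗ[𝔽] F :=
  (List.finRange m).foldr (fun μ g => ((D μ).toLinearMap ^ (i μ)) ∘ₗ g) LinearMap.id

theorem dpow_eq_lm (i : Fin m → ℕ) : Dpow D i = ⇑(DpowLM D i) := by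
  unfold Dpow DpowLM
  induction (List.finRange m) with
  | nil => rfl
  | cons μ t ih =>
    funext f
    simp only [List.foldr_cons, Function.comp_apply, LinearMap.comp_apply, ih,
      Module.End.pow_apply]
    rfl

theorem dpow_zero_of_msize (i : Fin m → ℕ) (hi : msize i = 0) (f : F) : Dpow D i f = f := by
  have h0 : ∀ ν, i ν = 0 := by
    intro ν
    exact (Finset.sum_eq_zero_iff.mp hi) ν (Finset.mem_univ ν)
  unfold Dpow
  rw [foldr_congr D _ (fun ν _ => h0 ν) f]
  induction (List.finRange m) with
  | nil => rfl
  | cons μ t ih => simpa using ih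

theorem msize_update_sub (i : Fin m → ℕ) (μ : Fin m) (hμ : i μ ≠ 0) :
    msize (Function.update i μ (i μ - 1)) + 1 = msize i := by
  classical
  unfold msize
  rw [Finset.sum_update_of_mem (Finset.mem_univ μ),
    Finset.sum_eq_sum_sdiff_singleton_add (Finset.mem_univ μ) i]
  omega

theorem isDiv_mul_D (μ : Fin m) (u w : F) : IsDiv D (u * D μ w + D μ u * w) := by
  have : u * D μ w + D μ u * w = D μ (u * w) := by
    rw [Derivation.leibniz]; simp [smul_eq_mul]; ring
  rw [this]; exact isDiv_D D μ _

theorem ibp (hDcomm : ∀ μ ν (f : F), D μ (D ν f) = D ν (D μ f)) (i : Fin m → ℕ) (u v : F) :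
    IsDiv D (u * Dpow D i v - (-1 : F) ^ msize i * (Dpow D i u * v)) := by
  classical
  generalize hn : msize i = n
  induction n generalizing i u with
  | zero =>
    rw [dpow_zero_of_msize D i hn, dpow_zero_of_msize D i hn]
    simpa using isDiv_zero D
  | succ n ih =>
    have hex : ∃ μ, i μ ≠ 0 := by
      by_contra h
      push_neg at h
      have : msize i = 0 := Finset.sum_eq_zero fun ν _ => h ν
      omega
    obtain ⟨μ, hμ⟩ := hex
    set i' := Function.update i μ (i μ - 1) with hi'
    have hup : Function.update i' μ (i' μ + 1) = i := by
      funext ν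
      rcases eq_or_ne ν μ with rfl | hne
      · simp [hi']; omega
      · simp [hi', Function.update_of_ne hne]
    have hms : msize i' + 1 = msize i := msize_update_sub i μ hμ
    have hms' : msize i' = n := by omega
    have hDi : ∀ x : F, Dpow D i x = Dpow D i' (D μ x) := by
      intro x; rw [← hup, dpow_succ D hDcomm]
    have hIH := ih i' (-(D μ u)) hms'
    have hA := isDiv_mul_D D μ u (Dpow D i' v)
    have hsum := isDiv_add D hA hIH
    have heq : u * D μ (Dpow D i' v) + D μ u * Dpow D i' v +
        (-(D μ u) * Dpow D i' v - (-1 : F) ^ n * (Dpow D i' (-(D μ u)) * v))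
        = u * Dpow D i v - (-1 : F) ^ (n + 1) * (Dpow D i u * v) := by
      have h1 : Dpow D i v = D μ (Dpow D i' v) := by
        rw [hDi v, dpow_D D hDcomm]
      have h2 : Dpow D i' (-(D μ u)) = -(Dpow D i u) := by
        rw [hDi u, dpow_eq_lm D i', map_neg]
      have h3 : (-1 : F) ^ (n + 1) = -(-1 : F) ^ n := by
        rw [pow_succ]; ring
      rw [h1, h2, h3]; ring
    rwa [heq] at hsum

end DpowLemmas


section FinsumHelpers

variable {ι κ : Type*}

theorem finsum_swap (f : ι → κ → F)
    (h : (Function.support fun p : ι × κ => f p.1 p.2).Finite) :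
    ∑ᶠ x, ∑ᶠ y, f x y = ∑ᶠ y, ∑ᶠ x, f x y := by
  classical
  set S := h.toFinset with hS
  have hmem : ∀ x y, f x y ≠ 0 → (x, y) ∈ S := by
    intro x y hxy
    rw [hS, Set.Finite.mem_toFinset]
    exact hxy
  have hI : Function.support (fun x => ∑ᶠ y, f x y) ⊆ ↑(S.image Prod.fst) := by
    intro x hx
    have : ∃ y, f x y ≠ 0 := by
      by_contra hc
      push_neg at hc
      refine hx ?_
      show (∑ᶠ y, f x y) = 0
      rw [finsum_congr hc]
      exact finsum_zero
    obtain ⟨y, hy⟩ := this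
    simp only [Finset.coe_image, Set.mem_image, Finset.mem_coe]
    exact ⟨(x, y), hmem x y hy, rfl⟩
  have hK : Function.support (fun y => ∑ᶠ x, f x y) ⊆ ↑(S.image Prod.snd) := by
    intro y hy
    have : ∃ x, f x y ≠ 0 := by
      by_contra hc
      push_neg at hc
      refine hy ?_
      show (∑ᶠ x, f x y) = 0
      rw [finsum_congr hc]
      exact finsum_zero
    obtain ⟨x, hx⟩ := this
    simp only [Finset.coe_image, Set.mem_image, Finset.mem_coe]
    exact ⟨(x, y), hmem x y hx, rfl⟩
  have hinner1 : ∀ x, ∑ᶠ y, f x y = ∑ y ∈ S.image Prod.snd, f x y := by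
    intro x
    refine finsum_eq_sum_of_support_subset _ ?_
    intro y hy
    simp only [Finset.coe_image, Set.mem_image, Finset.mem_coe]
    exact ⟨(x, y), hmem x y hy, rfl⟩
  have hinner2 : ∀ y, ∑ᶠ x, f x y = ∑ x ∈ S.image Prod.fst, f x y := by
    intro y
    refine finsum_eq_sum_of_support_subset _ ?_
    intro x hx
    simp only [Finset.coe_image, Set.mem_image, Finset.mem_coe]
    exact ⟨(x, y), hmem x y hx, rfl⟩
  rw [finsum_eq_sum_of_support_subset _ hI, finsum_eq_sum_of_support_subset _ hK]
  simp_rw [hinner1, hinner2]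
  exact Finset.sum_comm

end FinsumHelpers

section EvLemmas

variable (pa : A → Derivation 𝔽 F F)

theorem ev_zero (ψ : A → F) : ev pa ψ 0 = 0 := by
  simp [ev]

theorem support_ev (ψ : A → F) (f : F) :
    Function.support (fun a => ψ a * pa a f) ⊆ {a : A | pa a f ≠ 0} := by
  intro a ha
  simp only [Set.mem_setOf_eq]
  intro h0
  exact ha (by simp [h0])

theorem ev_add (hpafin : ∀ f : F, {a : A | pa a f ≠ 0}.Finite) (ψ : A → F) (x y : F) :
    ev pa ψ (x + y) = ev pa ψ x + ev pa ψ y := by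
  unfold ev
  rw [← finsum_add_distrib ((hpafin x).subset (support_ev pa ψ x))
    ((hpafin y).subset (support_ev pa ψ y))]
  exact finsum_congr fun a => by rw [map_add]; ring

theorem ev_neg (hpafin : ∀ f : F, {a : A | pa a f ≠ 0}.Finite) (ψ : A → F) (x : F) :
    ev pa ψ (-x) = -ev pa ψ x := by
  unfold ev
  rw [← finsum_neg_distrib]
  exact finsum_congr fun a => by rw [map_neg]; ring

theorem ev_sum (hpafin : ∀ f : F, {a : A | pa a f ≠ 0}.Finite) (ψ : A → F)
    {ι : Type*} (s : Finset ι) (g : ι → F) :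
    ev pa ψ (∑ x ∈ s, g x) = ∑ x ∈ s, ev pa ψ (g x) := by
  classical
  induction s using Finset.induction with
  | empty => simpa using ev_zero pa ψ
  | insert _ _ hx ih => rw [Finset.sum_insert hx, Finset.sum_insert hx, ev_add pa hpafin, ih]

theorem ev_finsum (hpafin : ∀ f : F, {a : A | pa a f ≠ 0}.Finite) (ψ : A → F)
    {ι : Type*} {g : ι → F} (hg : (Function.support g).Finite) :
    ev pa ψ (∑ᶠ x, g x) = ∑ᶠ x, ev pa ψ (g x) := by
  rw [finsum_eq_sum_of_support_subset g hg.coe_toFinset.ge, ev_sum pa hpafin]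
  refine (finsum_eq_sum_of_support_subset _ ?_).symm
  intro x hx
  have : g x ≠ 0 := by
    intro h0
    exact hx (by simp [h0, ev_zero])
  simpa using this

theorem ev_mul (hpafin : ∀ f : F, {a : A | pa a f ≠ 0}.Finite) (ψ : A → F) (x y : F) :
    ev pa ψ (x * y) = ev pa ψ x * y + x * ev pa ψ y := by
  unfold ev
  have h1 : (Function.support fun a => ψ a * pa a x * y).Finite := by
    refine ((hpafin x).subset ?_)
    intro a ha
    simp only [Set.mem_setOf_eq]
    intro h0
    exact ha (by simp [h0])
  have h2 : (Function.support fun a => x * (ψ a * pa a y)).Finite := by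
    refine ((hpafin y).subset ?_)
    intro a ha
    simp only [Set.mem_setOf_eq]
    intro h0
    exact ha (by simp [h0])
  rw [finsum_mul' _ y ((hpafin x).subset (support_ev pa ψ x)),
    mul_finsum' _ x ((hpafin y).subset (support_ev pa ψ y)),
    ← finsum_add_distrib h1 h2]
  refine finsum_congr fun a => ?_
  rw [Derivation.leibniz]
  simp only [smul_eq_mul]
  ring

end EvLemmas


section EvD

variable (pa : A → Derivation 𝔽 F F)

theorem derivation_map_finsum {ι : Type*} (d : Derivation 𝔽 F F) {g : ι → F}
    (hg : (Function.support g).Finite) :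
    d (∑ᶠ x, g x) = ∑ᶠ x, d (g x) := by
  have := d.toLinearMap.toAddMonoidHom.map_finsum hg
  simpa using this

theorem ev_D (hpafin : ∀ f : F, {a : A | pa a f ≠ 0}.Finite)
    (Γ : A → Fin m → A → F)
    (hΓfin : ∀ b : A, {p : Fin m × A | Γ b p.1 p.2 ≠ 0}.Finite)
    (hΓ : ∀ (μ : Fin m) (a : A) (f : F),
      D μ (pa a f) - pa a (D μ f) = ∑ᶠ b, Γ b μ a * pa b f)
    (ψ : A → F) (hψ : ∀ (a : A) (μ : Fin m), nabla D Γ ψ a μ = 0) (μ : Fin m) (f : F) :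
    D μ (ev pa ψ f) = ev pa ψ (D μ f) := by
  classical
  have Γslice : ∀ (b : A) (ν : Fin m), {a : A | Γ b ν a ≠ 0}.Finite := fun b ν =>
    ((hΓfin b).image Prod.snd).subset (fun a ha => ⟨(ν, a), ha, rfl⟩)
  have hsub : ∀ a, D μ (pa a f) = pa a (D μ f) + ∑ᶠ b, Γ b μ a * pa b f := fun a =>
    sub_eq_iff_eq_add'.mp (hΓ μ a f)
  have hDψ : ∀ a, D μ (ψ a) = -∑ᶠ b, Γ a μ b * ψ b := fun a =>
    eq_neg_of_add_eq_zero_left (hψ a μ)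
  have hDμ : D μ (ev pa ψ f) = ∑ᶠ a, (D μ (ψ a) * pa a f + ψ a * D μ (pa a f)) := by
    unfold ev
    rw [derivation_map_finsum (D μ) ((hpafin f).subset (support_ev pa ψ f))]
    refine finsum_congr fun a => ?_
    show D μ (ψ a * pa a f) = _
    rw [Derivation.leibniz]
    simp only [smul_eq_mul]
    ring
  have h1 : (Function.support fun a => D μ (ψ a) * pa a f).Finite := by
    refine (hpafin f).subset ?_
    intro a ha
    simp only [Set.mem_setOf_eq]
    intro h0
    exact ha (by simp [h0])
  have hbig : ({a : A | pa a (D μ f) ≠ 0} ∪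
      ⋃ b ∈ {b : A | pa b f ≠ 0}, {a : A | Γ b μ a ≠ 0}).Finite :=
    (hpafin (D μ f)).union ((hpafin f).biUnion fun b _ => Γslice b μ)
  have hDpa_zero : ∀ a, a ∉ ({a : A | pa a (D μ f) ≠ 0} ∪
      ⋃ b ∈ {b : A | pa b f ≠ 0}, {a : A | Γ b μ a ≠ 0}) → D μ (pa a f) = 0 := by
    intro a ha
    rw [Set.mem_union] at ha
    push_neg at ha
    obtain ⟨ha1, ha2⟩ := ha
    simp only [Set.mem_setOf_eq, not_not] at ha1
    have hterm : ∀ b, Γ b μ a * pa b f = 0 := by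
      intro b
      by_cases hb : pa b f = 0
      · rw [hb, mul_zero]
      · have : a ∉ {a : A | Γ b μ a ≠ 0} := fun hc =>
          ha2 (Set.mem_biUnion (by exact hb) hc)
        simp only [Set.mem_setOf_eq, not_not] at this
        rw [this, zero_mul]
    rw [hsub a, ha1, finsum_congr hterm, finsum_zero, add_zero]
  have hsupp2 : (Function.support fun a => ψ a * D μ (pa a f)).Finite := by
    refine hbig.subset ?_
    intro a ha
    by_contra hcon
    exact ha (by show ψ a * D μ (pa a f) = 0; rw [hDpa_zero a hcon, mul_zero])
  have hA : (Function.support fun a => ψ a * pa a (D μ f)).Finite :=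
    (hpafin (D μ f)).subset (support_ev pa ψ (D μ f))
  have hB : (Function.support fun a => ψ a * ∑ᶠ b, Γ b μ a * pa b f).Finite := by
    refine hbig.subset ?_
    intro a ha
    by_contra hcon
    have h0 : D μ (pa a f) = 0 := hDpa_zero a hcon
    rw [Set.mem_union] at hcon
    push_neg at hcon
    have hterm : ∀ b, Γ b μ a * pa b f = 0 := by
      intro b
      by_cases hb : pa b f = 0
      · rw [hb, mul_zero]
      · have : a ∉ {a : A | Γ b μ a ≠ 0} := fun hc =>
          hcon.2 (Set.mem_biUnion (by exact hb) hc)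
        simp only [Set.mem_setOf_eq, not_not] at this
        rw [this, zero_mul]
    refine ha ?_
    show ψ a * (∑ᶠ b, Γ b μ a * pa b f) = 0
    rw [finsum_congr hterm, finsum_zero, mul_zero]
  have hcancel : (∑ᶠ a, D μ (ψ a) * pa a f) +
      (∑ᶠ a, ψ a * ∑ᶠ b, Γ b μ a * pa b f) = 0 := by
    have e1 : ∑ᶠ a, D μ (ψ a) * pa a f
        = ∑ᶠ a, -(∑ᶠ b, ψ b * (Γ a μ b * pa a f)) := by
      refine finsum_congr fun a => ?_
      rw [hDψ a, neg_mul, finsum_mul' _ _ (((Γslice a μ).subset ?_))]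
      · rw [neg_inj]
        exact finsum_congr fun b => by ring
      · intro b hb
        simp only [Set.mem_setOf_eq]
        intro h0
        exact hb (by simp [h0])
    have e2 : ∑ᶠ a, ψ a * ∑ᶠ b, Γ b μ a * pa b f
        = ∑ᶠ a, ∑ᶠ b, ψ a * (Γ b μ a * pa b f) := by
      refine finsum_congr fun a => mul_finsum' _ _ ((hpafin f).subset ?_)
      intro b hb
      simp only [Set.mem_setOf_eq]
      intro h0
      exact hb (by simp [h0])
    have hpair : (Function.support fun p : A × A =>
        ψ p.1 * (Γ p.2 μ p.1 * pa p.2 f)).Finite := by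
      refine ((hpafin f).biUnion fun b (_ : pa b f ≠ 0) =>
        ((Γslice b μ).image fun a => (a, b))).subset ?_
      intro p hp
      have h2 : pa p.2 f ≠ 0 := fun h0 => hp (by simp [h0])
      have h3 : Γ p.2 μ p.1 ≠ 0 := fun h0 => hp (by simp [h0])
      exact Set.mem_biUnion h2 ⟨p.1, h3, by simp⟩
    have e3 : ∑ᶠ a, ∑ᶠ b, ψ a * (Γ b μ a * pa b f)
        = ∑ᶠ b, ∑ᶠ a, ψ a * (Γ b μ a * pa b f) :=
      finsum_swap _ hpair
    rw [e1, e2, e3, finsum_neg_distrib]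
    exact neg_add_cancel _
  calc D μ (ev pa ψ f)
      = ∑ᶠ a, (D μ (ψ a) * pa a f + ψ a * D μ (pa a f)) := hDμ
    _ = (∑ᶠ a, D μ (ψ a) * pa a f) + ∑ᶠ a, ψ a * D μ (pa a f) :=
        finsum_add_distrib h1 hsupp2
    _ = (∑ᶠ a, D μ (ψ a) * pa a f) +
        ((∑ᶠ a, ψ a * pa a (D μ f)) + ∑ᶠ a, ψ a * ∑ᶠ b, Γ b μ a * pa b f) := by
        congr 1
        rw [← finsum_add_distrib hA hB]
        exact finsum_congr fun a => by rw [hsub a]; ring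
    _ = (∑ᶠ a, ψ a * pa a (D μ f)) + ((∑ᶠ a, D μ (ψ a) * pa a f) +
        ∑ᶠ a, ψ a * ∑ᶠ b, Γ b μ a * pa b f) := by ring
    _ = ev pa ψ (D μ f) := by rw [hcancel, add_zero]; rfl

theorem ev_dpow (hpafin : ∀ f : F, {a : A | pa a f ≠ 0}.Finite)
    (Γ : A → Fin m → A → F)
    (hΓfin : ∀ b : A, {p : Fin m × A | Γ b p.1 p.2 ≠ 0}.Finite)
    (hΓ : ∀ (μ : Fin m) (a : A) (f : F),
      D μ (pa a f) - pa a (D μ f) = ∑ᶠ b, Γ b μ a * pa b f)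
    (ψ : A → F) (hψ : ∀ (a : A) (μ : Fin m), nabla D Γ ψ a μ = 0) (i : Fin m → ℕ) (f : F) :
    ev pa ψ (Dpow D i f) = Dpow D i (ev pa ψ f) := by
  have hiter : ∀ (ν : Fin m) (n : ℕ) (x : F),
      ev pa ψ ((⇑(D ν))^[n] x) = (⇑(D ν))^[n] (ev pa ψ x) := by
    intro ν n
    induction n with
    | zero => intro x; rfl
    | succ n ihn =>
      intro x
      rw [Function.iterate_succ_apply, Function.iterate_succ_apply, ihn,
        ← ev_D D pa hpafin Γ hΓfin hΓ ψ hψ ν x]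
  unfold Dpow
  induction (List.finRange m) with
  | nil => rfl
  | cons ν t ih =>
    simp only [List.foldr_cons, Function.comp_apply]
    rw [hiter, ih]

end EvD


section Jet

theorem dpow_map_zero (i : Fin m → ℕ) : Dpow D i (0 : F) = 0 := by
  rw [dpow_eq_lm]; exact map_zero _

theorem finsum_subset {ι : Type*} {g : ι → F} {s : Finset ι}
    (h : ∀ x, g x ≠ 0 → x ∈ s) : ∑ᶠ x, g x = ∑ x ∈ s, g x :=
  finsum_eq_sum_of_support_subset g h

variable (jc : A → (Fin m → ℕ) → A' → F)

/-- if all coefficients vanish then `jstar` vanishes -/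
theorem jstar_eq_zero (f : A → F) (α : A')
    (h : ∀ (a : A) (i : Fin m → ℕ), jc a i α * f a = 0) : jstar D jc f α = 0 := by
  unfold jstar
  refine finsum_eq_zero_of_forall_eq_zero fun a => ?_
  refine finsum_eq_zero_of_forall_eq_zero fun i => ?_
  rw [h a i, dpow_map_zero, mul_zero]

theorem jstar_support (hjfin : ∀ a : A, {p : (Fin m → ℕ) × A' | jc a p.1 p.2 ≠ 0}.Finite)
    {f : A → F} (hf : (Function.support f).Finite) :
    (Function.support (jstar D jc f)).Finite := by
  classical
  refine (hf.biUnion fun a (_ : f a ≠ 0) =>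
    ((hjfin a).image Prod.snd)).subset ?_
  intro α hα
  have hex : ∃ a, f a ≠ 0 ∧ ∃ i, jc a i α ≠ 0 := by
    by_contra hc
    push_neg at hc
    refine hα (jstar_eq_zero D jc f α fun a i => ?_)
    by_cases ha : f a = 0
    · rw [ha, mul_zero]
    · rw [hc a ha i, zero_mul]
  obtain ⟨a, ha, i, hi⟩ := hex
  exact Set.mem_biUnion ha ⟨(i, α), hi, rfl⟩

theorem pair_support {B : Type*} {f χ : B → F} (hf : (Function.support f).Finite) :
    (Function.support fun β => f β * χ β).Finite :=
  hf.subset fun β hβ => fun h0 => hβ (by simp [h0])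

theorem pair_sub {B : Type*} (f1 f2 χ : B → F) (h1 : (Function.support f1).Finite)
    (h2 : (Function.support f2).Finite) :
    pair (fun β => f1 β - f2 β) χ = pair f1 χ - pair f2 χ := by
  unfold pair
  rw [← finsum_sub_distrib (pair_support h1) (pair_support h2)]
  exact finsum_congr fun β => by ring

/-- Integration by parts for the jet map: `⟨j*f, χ⟩ ≡ ⟨f, jχ⟩ mod Div`. -/
theorem pair_jstar_jmap (hDcomm : ∀ μ ν (f : F), D μ (D ν f) = D ν (D μ f))
    (hjfin : ∀ a : A, {p : (Fin m → ℕ) × A' | jc a p.1 p.2 ≠ 0}.Finite)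
    {f : A → F} (hf : (Function.support f).Finite) (χ : A' → F) :
    IsDiv D (pair (jstar D jc f) χ - pair f (jmap D jc χ)) := by
  classical
  set sa : Finset A := hf.toFinset with hsa
  set si : Finset (Fin m → ℕ) :=
    sa.biUnion (fun a => (hjfin a).toFinset.image Prod.fst) with hsi
  set sα : Finset A' := sa.biUnion (fun a => (hjfin a).toFinset.image Prod.snd) with hsα
  have hmemi : ∀ a ∈ sa, ∀ (i : Fin m → ℕ) (α : A'), jc a i α ≠ 0 → i ∈ si := by
    intro a ha i α h
    exact Finset.mem_biUnion.mpr ⟨a, ha, Finset.mem_image.mpr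
      ⟨(i, α), (hjfin a).mem_toFinset.mpr h, rfl⟩⟩
  have hmemα : ∀ a ∈ sa, ∀ (i : Fin m → ℕ) (α : A'), jc a i α ≠ 0 → α ∈ sα := by
    intro a ha i α h
    exact Finset.mem_biUnion.mpr ⟨a, ha, Finset.mem_image.mpr
      ⟨(i, α), (hjfin a).mem_toFinset.mpr h, rfl⟩⟩
  have hmema : ∀ a : A, f a ≠ 0 → a ∈ sa := fun a ha => hf.mem_toFinset.mpr ha
  have claim1 : pair (jstar D jc f) χ = ∑ α ∈ sα, ∑ a ∈ sa, ∑ i ∈ si,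
      (-1 : F) ^ msize i * Dpow D i (jc a i α * f a) * χ α := by
    unfold pair
    rw [finsum_subset (s := sα) ?hα]
    case hα =>
      intro α hα
      have : jstar D jc f α ≠ 0 := fun h0 => hα (by rw [h0, zero_mul])
      have hex : ∃ a, f a ≠ 0 ∧ ∃ i, jc a i α ≠ 0 := by
        by_contra hc
        push_neg at hc
        refine this (jstar_eq_zero D jc f α fun a i => ?_)
        by_cases ha : f a = 0
        · rw [ha, mul_zero]
        · rw [hc a ha i, zero_mul]
      obtain ⟨a, ha, i, hi⟩ := hex
      exact hmemα a (hmema a ha) i α hi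
    refine Finset.sum_congr rfl fun α _ => ?_
    unfold jstar
    rw [finsum_subset (s := sa) ?ha]
    case ha =>
      intro a ha
      have : f a ≠ 0 := by
        intro h0
        refine ha ?_
        refine finsum_eq_zero_of_forall_eq_zero fun i => ?_
        rw [h0, mul_zero, dpow_map_zero, mul_zero]
      exact hmema a this
    rw [Finset.sum_mul]
    refine Finset.sum_congr rfl fun a ha => ?_
    rw [finsum_subset (s := si) ?hi]
    case hi =>
      intro i hi
      have : jc a i α ≠ 0 := by
        intro h0
        refine hi ?_
        rw [h0, zero_mul, dpow_map_zero, mul_zero]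
      exact hmemi a ha i α this
    rw [Finset.sum_mul]
  have claim2 : pair f (jmap D jc χ) = ∑ α ∈ sα, ∑ a ∈ sa, ∑ i ∈ si,
      f a * (jc a i α * Dpow D i (χ α)) := by
    unfold pair
    rw [finsum_subset (s := sa) fun a ha =>
      hmema a (fun h0 => ha (by rw [h0, zero_mul]))]
    rw [Finset.sum_comm]
    refine Finset.sum_congr rfl fun a ha => ?_
    unfold jmap
    rw [finsum_subset (s := si) ?hi2]
    case hi2 =>
      intro i hi
      have : ∃ α, jc a i α ≠ 0 := by
        by_contra hc
        push_neg at hc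
        refine hi ?_
        refine finsum_eq_zero_of_forall_eq_zero fun α => ?_
        rw [hc α, zero_mul]
      obtain ⟨α, hα⟩ := this
      exact hmemi a ha i α hα
    rw [Finset.mul_sum, Finset.sum_comm]
    refine Finset.sum_congr rfl fun α _ => ?_
    rw [finsum_subset (s := sα) fun β hβ =>
      hmemα a ha α β (fun h0 => hβ (by rw [h0, zero_mul]))]
    rw [Finset.mul_sum]
  rw [claim1, claim2, ← Finset.sum_sub_distrib]
  refine isDiv_sum D _ _ fun α _ => ?_
  rw [← Finset.sum_sub_distrib]
  refine isDiv_sum D _ _ fun a _ => ?_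
  rw [← Finset.sum_sub_distrib]
  refine isDiv_sum D _ _ fun i _ => ?_
  have hib := ibp D hDcomm i (jc a i α * f a) (χ α)
  have heq : (-1 : F) ^ msize i * Dpow D i (jc a i α * f a) * χ α -
      f a * (jc a i α * Dpow D i (χ α))
      = -(jc a i α * f a * Dpow D i (χ α) -
        (-1 : F) ^ msize i * (Dpow D i (jc a i α * f a) * χ α)) := by ring
  rw [heq]
  exact isDiv_neg D hib

end Jet


section EvVard

variable (pa : A → Derivation 𝔽 F F) (jc : A → (Fin m → ℕ) → A' → F)

theorem ev_neg_one_pow (ψ : A → F) (k : ℕ) : ev pa ψ ((-1 : F) ^ k) = 0 := by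
  unfold ev
  refine finsum_eq_zero_of_forall_eq_zero fun a => ?_
  have : pa a ((-1 : F) ^ k) = 0 := by
    rcases neg_one_pow_eq_or F k with h | h <;> rw [h] <;> simp
  rw [this, mul_zero]

theorem ev_pa (hpafin : ∀ f : F, {a : A | pa a f ≠ 0}.Finite)
    (hpacomm : ∀ a b (f : F), pa a (pa b f) = pa b (pa a f))
    (ψ : A → F) (L : F) (a : A) :
    ev pa ψ (pa a L) = pa a (ev pa ψ L) - ∑ᶠ b, pa a (ψ b) * pa b L := by
  have h1 : (Function.support fun b => pa a (ψ b) * pa b L).Finite := by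
    refine (hpafin L).subset fun b hb => ?_
    simp only [Set.mem_setOf_eq]
    intro h0
    exact hb (by simp [h0])
  have h2 : (Function.support fun b => ψ b * pa b (pa a L)).Finite :=
    (hpafin (pa a L)).subset (support_ev pa ψ (pa a L))
  have key : pa a (ev pa ψ L) = (∑ᶠ b, pa a (ψ b) * pa b L) + ev pa ψ (pa a L) := by
    unfold ev
    rw [derivation_map_finsum (pa a) ((hpafin L).subset (support_ev pa ψ L)),
      ← finsum_add_distrib h1 h2]
    refine finsum_congr fun b => ?_
    rw [Derivation.leibniz]
    simp only [smul_eq_mul]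
    rw [hpacomm a b L]
    ring
  linear_combination -key

theorem g_support (hpafin : ∀ f : F, {a : A | pa a f ≠ 0}.Finite) (ψ : A → F) (L : F) :
    (Function.support fun a => ∑ᶠ b, pa a (ψ b) * pa b L).Finite := by
  classical
  refine ((hpafin L).biUnion fun b (_ : pa b L ≠ 0) => hpafin (ψ b)).subset ?_
  intro a ha
  have hex : ∃ b, pa a (ψ b) * pa b L ≠ 0 := by
    by_contra hc
    push_neg at hc
    exact ha (finsum_eq_zero_of_forall_eq_zero hc)
  obtain ⟨b, hb⟩ := hex
  have hb1 : pa b L ≠ 0 := fun h0 => hb (by simp [h0])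
  have hb2 : pa a (ψ b) ≠ 0 := fun h0 => hb (by simp [h0])
  exact Set.mem_biUnion hb1 hb2

theorem ev_vard
    (hDcomm : ∀ μ ν (f : F), D μ (D ν f) = D ν (D μ f))
    (hpafin : ∀ f : F, {a : A | pa a f ≠ 0}.Finite)
    (hpacomm : ∀ a b (f : F), pa a (pa b f) = pa b (pa a f))
    (Γ : A → Fin m → A → F)
    (hΓfin : ∀ b : A, {p : Fin m × A | Γ b p.1 p.2 ≠ 0}.Finite)
    (hΓ : ∀ (μ : Fin m) (a : A) (f : F),
      D μ (pa a f) - pa a (D μ f) = ∑ᶠ b, Γ b μ a * pa b f)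
    (hjfin : ∀ a : A, {p : (Fin m → ℕ) × A' | jc a p.1 p.2 ≠ 0}.Finite)
    (ψ : A → F) (hψ : ∀ (a : A) (μ : Fin m), nabla D Γ ψ a μ = 0)
    (hevjψ : ∀ (a : A) (i : Fin m → ℕ) (α' : A'), ev pa ψ (jc a i α') = 0)
    (L : F) (α : A') :
    ev pa ψ (vard D pa jc L α)
      = vard D pa jc (ev pa ψ L) α
        - jstar D jc (fun a => ∑ᶠ b, pa a (ψ b) * pa b L) α := by
  classical
  have hgfin := g_support pa hpafin ψ L
  set g : A → F := fun a => ∑ᶠ b, pa a (ψ b) * pa b L with hgdef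
  set sa : Finset A := ((hpafin L).toFinset ∪ (hpafin (ev pa ψ L)).toFinset)
    ∪ hgfin.toFinset with hsa
  set si : Finset (Fin m → ℕ) :=
    sa.biUnion (fun a => (hjfin a).toFinset.image Prod.fst) with hsi
  have hmemi : ∀ a ∈ sa, ∀ (i : Fin m → ℕ) (α' : A'), jc a i α' ≠ 0 → i ∈ si := by
    intro a ha i α' h
    exact Finset.mem_biUnion.mpr ⟨a, ha, Finset.mem_image.mpr
      ⟨(i, α'), (hjfin a).mem_toFinset.mpr h, rfl⟩⟩
  have expand : ∀ h : A → F, (∀ a, h a ≠ 0 → a ∈ sa) →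
      jstar D jc h α = ∑ a ∈ sa, ∑ i ∈ si,
        (-1 : F) ^ msize i * Dpow D i (jc a i α * h a) := by
    intro h hh
    unfold jstar
    rw [finsum_subset (s := sa) ?ha]
    case ha =>
      intro a ha
      have : h a ≠ 0 := by
        intro h0
        refine ha (finsum_eq_zero_of_forall_eq_zero fun i => ?_)
        rw [h0, mul_zero, dpow_map_zero, mul_zero]
      exact hh a this
    refine Finset.sum_congr rfl fun a ha => ?_
    refine finsum_subset fun i hi => ?_
    have : jc a i α ≠ 0 := by
      intro h0
      exact hi (by rw [h0, zero_mul, dpow_map_zero, mul_zero])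
    exact hmemi a ha i α this
  have hmL : ∀ a : A, pa a L ≠ 0 → a ∈ sa := fun a ha => by
    rw [hsa]
    exact Finset.mem_union_left _ (Finset.mem_union_left _ ((hpafin L).mem_toFinset.mpr ha))
  have hmE : ∀ a : A, pa a (ev pa ψ L) ≠ 0 → a ∈ sa := fun a ha => by
    rw [hsa]
    exact Finset.mem_union_left _
      (Finset.mem_union_right _ ((hpafin (ev pa ψ L)).mem_toFinset.mpr ha))
  have hmG : ∀ a : A, g a ≠ 0 → a ∈ sa := fun a ha => by
    rw [hsa]
    exact Finset.mem_union_right _ (hgfin.mem_toFinset.mpr ha)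
  have hterm : ∀ (a : A) (i : Fin m → ℕ),
      ev pa ψ ((-1 : F) ^ msize i * Dpow D i (jc a i α * pa a L))
        = (-1 : F) ^ msize i * Dpow D i (jc a i α * pa a (ev pa ψ L))
          - (-1 : F) ^ msize i * Dpow D i (jc a i α * g a) := by
    intro a i
    rw [ev_mul pa hpafin, ev_neg_one_pow, zero_mul, zero_add,
      ev_dpow D pa hpafin Γ hΓfin hΓ ψ hψ,
      ev_mul pa hpafin, hevjψ, zero_mul, zero_add,
      ev_pa pa hpafin hpacomm]
    rw [mul_sub (jc a i α), dpow_eq_lm D i, map_sub]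
    ring
  calc ev pa ψ (vard D pa jc L α)
      = ev pa ψ (∑ a ∈ sa, ∑ i ∈ si,
          (-1 : F) ^ msize i * Dpow D i (jc a i α * pa a L)) := by
        rw [show vard D pa jc L α = _ from expand (fun a => pa a L) hmL]
    _ = ∑ a ∈ sa, ∑ i ∈ si,
          ev pa ψ ((-1 : F) ^ msize i * Dpow D i (jc a i α * pa a L)) := by
        rw [ev_sum pa hpafin]
        exact Finset.sum_congr rfl fun a _ => ev_sum pa hpafin ψ _ _
    _ = ∑ a ∈ sa, ∑ i ∈ si,
          ((-1 : F) ^ msize i * Dpow D i (jc a i α * pa a (ev pa ψ L))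
            - (-1 : F) ^ msize i * Dpow D i (jc a i α * g a)) := by
        exact Finset.sum_congr rfl fun a _ => Finset.sum_congr rfl fun i _ => hterm a i
    _ = (∑ a ∈ sa, ∑ i ∈ si,
          (-1 : F) ^ msize i * Dpow D i (jc a i α * pa a (ev pa ψ L)))
        - ∑ a ∈ sa, ∑ i ∈ si,
          (-1 : F) ^ msize i * Dpow D i (jc a i α * g a) := by
        rw [← Finset.sum_sub_distrib]
        exact Finset.sum_congr rfl fun a _ => Finset.sum_sub_distrib _ _
    _ = vard D pa jc (ev pa ψ L) α - jstar D jc g α := by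
        rw [show vard D pa jc (ev pa ψ L) α = _ from
          expand (fun a => pa a (ev pa ψ L)) hmE,
          show jstar D jc g α = _ from expand g hmG]

end EvVard


section Symm

variable (pa : A → Derivation 𝔽 F F)

theorem ev_ev (hpafin : ∀ f : F, {a : A | pa a f ≠ 0}.Finite)
    (hpacomm : ∀ a b (f : F), pa a (pa b f) = pa b (pa a f))
    (φ ψ : A → F) (L : F) :
    ev pa φ (ev pa ψ L) - pair (fun a => ∑ᶠ b, pa a (ψ b) * pa b L) φ
      = ∑ᶠ a, ∑ᶠ b, φ a * (ψ b * pa a (pa b L)) := by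
  have hgfin := g_support pa hpafin ψ L
  have hpa_ev : ∀ a, pa a (ev pa ψ L)
      = ev pa ψ (pa a L) + ∑ᶠ b, pa a (ψ b) * pa b L := fun a => by
    linear_combination -ev_pa pa hpafin hpacomm ψ L a
  have h1 : (Function.support fun a => φ a * ev pa ψ (pa a L)).Finite := by
    refine (hpafin L).subset fun a ha => ?_
    simp only [Set.mem_setOf_eq]
    intro h0
    refine ha ?_
    show φ a * ev pa ψ (pa a L) = 0
    rw [h0, ev_zero, mul_zero]
  have h2 : (Function.support fun a => φ a * (∑ᶠ b, pa a (ψ b) * pa b L)).Finite := by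
    refine hgfin.subset fun a ha => ?_
    intro h0
    refine ha ?_
    show φ a * (∑ᶠ b, pa a (ψ b) * pa b L) = 0
    rw [show (∑ᶠ b, pa a (ψ b) * pa b L) = 0 from h0, mul_zero]
  have e0 : ev pa φ (ev pa ψ L)
      = ∑ᶠ a, (φ a * ev pa ψ (pa a L) + φ a * (∑ᶠ b, pa a (ψ b) * pa b L)) := by
    refine finsum_congr fun a => ?_
    rw [hpa_ev a]
    ring
  have e1 : pair (fun a => ∑ᶠ b, pa a (ψ b) * pa b L) φ
      = ∑ᶠ a, φ a * (∑ᶠ b, pa a (ψ b) * pa b L) :=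
    finsum_congr fun a => mul_comm _ _
  rw [e0, finsum_add_distrib h1 h2, e1]
  have e2 : (∑ᶠ a, φ a * ev pa ψ (pa a L))
      = ∑ᶠ a, ∑ᶠ b, φ a * (ψ b * pa a (pa b L)) := by
    refine finsum_congr fun a => ?_
    rw [show ev pa ψ (pa a L) = ∑ᶠ b, ψ b * pa b (pa a L) from rfl,
      mul_finsum' _ _ ((hpafin (pa a L)).subset (support_ev pa ψ (pa a L)))]
    exact finsum_congr fun b => by rw [hpacomm b a L]
  rw [e2]
  ring

theorem second_var_symm (hpafin : ∀ f : F, {a : A | pa a f ≠ 0}.Finite)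
    (hpacomm : ∀ a b (f : F), pa a (pa b f) = pa b (pa a f))
    (ψK ψM : A → F) (L : F) :
    (ev pa ψM (ev pa ψK L) - pair (fun a => ∑ᶠ b, pa a (ψK b) * pa b L) ψM)
      - (ev pa ψK (ev pa ψM L) - pair (fun a => ∑ᶠ b, pa a (ψM b) * pa b L) ψK) = 0 := by
  classical
  rw [ev_ev pa hpafin hpacomm ψM ψK L, ev_ev pa hpafin hpacomm ψK ψM L]
  have hfin : (Function.support fun p : A × A =>
      ψM p.1 * (ψK p.2 * pa p.1 (pa p.2 L))).Finite := by
    refine ((hpafin L).biUnion fun b (_ : pa b L ≠ 0) =>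
      (hpafin (pa b L)).image fun a => (a, b)).subset ?_
    intro p hp
    have h1 : pa p.1 (pa p.2 L) ≠ 0 := fun h0 => hp (by simp [h0])
    have h2 : pa p.2 L ≠ 0 := fun h0 => h1 (by rw [h0]; simp)
    exact Set.mem_biUnion h2 ⟨p.1, h1, by simp⟩
  rw [finsum_swap _ hfin, sub_eq_zero]
  refine finsum_congr fun b => finsum_congr fun a => ?_
  rw [hpacomm a b L]
  ring

end Symm

end Aux

open Aux in
/-- symmetry of second variations: with `δR = j*(∂R)` and
`φ(R) = j(Λ(δR))`, one has
`⟨ev_{φ(K)}(δL), Λ(δM)⟩ - ⟨ev_{φ(M)}(δL), Λ(δK)⟩ ∈ Div F^M`. -/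
theorem stmt_12
    {𝔽 : Type*} [Field 𝔽] [CharZero 𝔽] {F : Type*} [CommRing F] [Algebra 𝔽 F]
    {m : ℕ} {A A' : Type*}
    (D : Fin m → Derivation 𝔽 F F)
    (hDcomm : ∀ μ ν (f : F), D μ (D ν f) = D ν (D μ f))
    (pa : A → Derivation 𝔽 F F)
    (hpacomm : ∀ a b (f : F), pa a (pa b f) = pa b (pa a f))
    (hpafin : ∀ f : F, {a : A | pa a f ≠ 0}.Finite)
    (Γ : A → Fin m → A → F)
    (hΓfin : ∀ b : A, {p : Fin m × A | Γ b p.1 p.2 ≠ 0}.Finite)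
    (hΓ : ∀ (μ : Fin m) (a : A) (f : F),
      D μ (pa a f) - pa a (D μ f) = ∑ᶠ b, Γ b μ a * pa b f)
    (jc : A → (Fin m → ℕ) → A' → F)
    (hjfin : ∀ a : A, {p : (Fin m → ℕ) × A' | jc a p.1 p.2 ≠ 0}.Finite)
    (hnj : ∀ (φ : A' → F) (a : A) (μ : Fin m), nabla D Γ (jmap D jc φ) a μ = 0)
    (hevj : ∀ ψ : A → F, (∀ (a : A) (μ : Fin m), nabla D Γ ψ a μ = 0) →
      ∀ (a : A) (i : Fin m → ℕ) (α : A'), ev pa ψ (jc a i α) = 0)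
    (Λc : A' → A' → (Fin m → ℕ) → F)
    (hΛfin : ∀ α : A',
      {p : (Fin m → ℕ) × A' | Λc α p.2 p.1 ≠ 0 ∨ Λc p.2 α p.1 ≠ 0}.Finite)
    (K L M : F) :
    IsDiv D
      (pair (fun α => ev pa (hamv D pa jc Λc K) (vard D pa jc L α))
          (Lam D Λc (vard D pa jc M))
        - pair (fun α => ev pa (hamv D pa jc Λc M) (vard D pa jc L α))
          (Lam D Λc (vard D pa jc K))) := by
  classical
  set χK := Lam D Λc (vard D pa jc K) with hχK
  set χM := Lam D Λc (vard D pa jc M) with hχM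
  set ψK := hamv D pa jc Λc K with hψK
  set ψM := hamv D pa jc Λc M with hψM
  have hjK : jmap D jc χK = ψK := by rw [hχK, hψK]; rfl
  have hjM : jmap D jc χM = ψM := by rw [hχM, hψM]; rfl
  have hnabK : ∀ (a : A) (μ : Fin m), nabla D Γ ψK a μ = 0 := by
    intro a μ
    rw [hψK]
    exact hnj (Lam D Λc (vard D pa jc K)) a μ
  have hnabM : ∀ (a : A) (μ : Fin m), nabla D Γ ψM a μ = 0 := by
    intro a μ
    rw [hψM]
    exact hnj (Lam D Λc (vard D pa jc M)) a μ
  have hevK := hevj ψK hnabK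
  have hevM := hevj ψM hnabM
  set gK : A → F := fun a => ∑ᶠ b, pa a (ψK b) * pa b L with hgK
  set gM : A → F := fun a => ∑ᶠ b, pa a (ψM b) * pa b L with hgM
  have hgKfin : (Function.support gK).Finite := by
    rw [hgK]; exact g_support pa hpafin ψK L
  have hgMfin : (Function.support gM).Finite := by
    rw [hgM]; exact g_support pa hpafin ψM L
  have hvK : (fun α => ev pa ψK (vard D pa jc L α))
      = fun α => vard D pa jc (ev pa ψK L) α - jstar D jc gK α := by
    refine funext fun α => ?_
    rw [hgK]
    exact ev_vard D pa jc hDcomm hpafin hpacomm Γ hΓfin hΓ hjfin ψK hnabK hevK L α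
  have hvM : (fun α => ev pa ψM (vard D pa jc L α))
      = fun α => vard D pa jc (ev pa ψM L) α - jstar D jc gM α := by
    refine funext fun α => ?_
    rw [hgM]
    exact ev_vard D pa jc hDcomm hpafin hpacomm Γ hΓfin hΓ hjfin ψM hnabM hevM L α
  have hVKfin : (Function.support (vard D pa jc (ev pa ψK L))).Finite :=
    jstar_support D jc hjfin (hpafin (ev pa ψK L))
  have hVMfin : (Function.support (vard D pa jc (ev pa ψM L))).Finite :=
    jstar_support D jc hjfin (hpafin (ev pa ψM L))
  have hJKfin : (Function.support (jstar D jc gK)).Finite :=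
    jstar_support D jc hjfin hgKfin
  have hJMfin : (Function.support (jstar D jc gM)).Finite :=
    jstar_support D jc hjfin hgMfin
  rw [hvK, hvM,
    pair_sub (vard D pa jc (ev pa ψK L)) (jstar D jc gK) χM hVKfin hJKfin,
    pair_sub (vard D pa jc (ev pa ψM L)) (jstar D jc gM) χK hVMfin hJMfin]
  have c1 : IsDiv D (pair (vard D pa jc (ev pa ψK L)) χM
      - pair (fun a => pa a (ev pa ψK L)) (jmap D jc χM)) :=
    pair_jstar_jmap D jc hDcomm hjfin (hpafin (ev pa ψK L)) χM
  have c2 : IsDiv D (pair (jstar D jc gK) χM - pair gK (jmap D jc χM)) :=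
    pair_jstar_jmap D jc hDcomm hjfin hgKfin χM
  have c3 : IsDiv D (pair (vard D pa jc (ev pa ψM L)) χK
      - pair (fun a => pa a (ev pa ψM L)) (jmap D jc χK)) :=
    pair_jstar_jmap D jc hDcomm hjfin (hpafin (ev pa ψM L)) χK
  have c4 : IsDiv D (pair (jstar D jc gM) χK - pair gM (jmap D jc χK)) :=
    pair_jstar_jmap D jc hDcomm hjfin hgMfin χK
  rw [hjM] at c1 c2
  rw [hjK] at c3 c4
  have hY1 : pair (fun a => pa a (ev pa ψK L)) ψM = ev pa ψM (ev pa ψK L) :=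
    finsum_congr fun a => mul_comm _ _
  have hY3 : pair (fun a => pa a (ev pa ψM L)) ψK = ev pa ψK (ev pa ψM L) :=
    finsum_congr fun a => mul_comm _ _
  have hzero := second_var_symm pa hpafin hpacomm ψK ψM L
  rw [← hgK, ← hgM, ← hY1, ← hY3] at hzero
  have hfinal := isDiv_sub D (isDiv_sub D c1 c2) (isDiv_sub D c3 c4)
  have hgoal_eq : (pair (vard D pa jc (ev pa ψK L)) χM - pair (jstar D jc gK) χM)
      - (pair (vard D pa jc (ev pa ψM L)) χK - pair (jstar D jc gM) χK)
      = ((pair (vard D pa jc (ev pa ψK L)) χM - pair (fun a => pa a (ev pa ψK L)) ψM)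
          - (pair (jstar D jc gK) χM - pair gK ψM))
        - ((pair (vard D pa jc (ev pa ψM L)) χK - pair (fun a => pa a (ev pa ψM L)) ψK)
          - (pair (jstar D jc gM) χK - pair gM ψK)) := by
    linear_combination hzero
  rw [hgoal_eq]
  exact hfinal
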